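/- Let α ∈ (0,1], let γ(x) = (Cx, y(x)) on [0,1] with C > 0 and y' α-Hölder. Fix ε₀ ∈ (0,1/2) and x ∈ [0,1], and let (pₙ, qₙ) satisfy pₙ/qₙ ∈ [0,1], |pₙ/qₙ − x| < qₙ^{-1/2}, qₙ → ∞. Then for all large n, | y'(x) − (qₙ+1)!·S_{pₙ, qₙ−pₙ}/C^{qₙ} | ≤ C₁ · qₙ^{(-1/2+ε₀)α}, where C₁ depends only on ε₀, α, ‖γ'‖_∞, and the α-Hölder constant of γ'. -/

import Mathlib

open MeasureTheory intervalIntegral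

lemma beta_nat : ∀ (b a : ℕ), (∫ s in (0:ℝ)..1, s ^ a * (1 - s) ^ b)
    = (a.factorial * b.factorial : ℝ) / (a + b + 1).factorial := by
  intro b
  induction b with
  | zero =>
    intro a
    have ha : (a.factorial : ℝ) ≠ 0 := by positivity
    simp [integral_pow, Nat.factorial_succ]
    field_simp
  | succ b ih =>
    intro a
    have h1 : ∀ s ∈ Set.uIcc (0:ℝ) 1, HasDerivAt (fun t : ℝ => (1 - t) ^ (b + 1))
        (-((b+1 : ℝ) * (1 - s) ^ b)) s := by
      intro s _
      have := ((hasDerivAt_id s).const_sub 1).fun_pow (b+1)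
      simpa using this
    have h2 : ∀ s ∈ Set.uIcc (0:ℝ) 1, HasDerivAt (fun t : ℝ => t ^ (a + 1) / (a + 1 : ℝ))
        (s ^ a) s := by
      intro s _
      have := (hasDerivAt_pow (a+1) s).div_const (a+1 : ℝ)
      have ha : ((a:ℝ)+1) ≠ 0 := by positivity
      rw [show s ^ a = ((a+1:ℕ):ℝ) * s ^ (a + 1 - 1) / ((a:ℝ)+1) by
        push_cast; field_simp]
      exact this
    have h3 : IntervalIntegrable (fun s : ℝ => -((b+1 : ℝ) * (1 - s) ^ b)) MeasureTheory.volume 0 1 :=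
      (Continuous.intervalIntegrable (by continuity) _ _)
    have h4 : IntervalIntegrable (fun s : ℝ => s ^ a) MeasureTheory.volume 0 1 :=
      (Continuous.intervalIntegrable (by continuity) _ _)
    have ibp := intervalIntegral.integral_mul_deriv_eq_deriv_mul h1 h2 h3 h4
    have e1 : (∫ s in (0:ℝ)..1, s ^ a * (1 - s) ^ (b+1))
        = ∫ s in (0:ℝ)..1, (1 - s) ^ (b+1) * s ^ a := by
      apply intervalIntegral.integral_congr; intro s _; ring
    rw [e1, ibp]
    have e2 : (∫ s in (0:ℝ)..1, -((b+1 : ℝ) * (1 - s) ^ b) * (s ^ (a+1) / (a+1 : ℝ)))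
        = (-((b+1:ℝ)/(a+1:ℝ))) * ∫ s in (0:ℝ)..1, s ^ (a+1) * (1-s) ^ b := by
      rw [← intervalIntegral.integral_const_mul]
      apply intervalIntegral.integral_congr; intro s _; field_simp
    rw [e2, ih (a+1)]
    have ha : ((a:ℝ)+1) ≠ 0 := by positivity
    have hfa : ((a+1).factorial : ℝ) = ((a:ℝ)+1) * a.factorial := by
      push_cast [Nat.factorial_succ]; ring
    have hfb : (((b+1)).factorial : ℝ) = ((b:ℝ)+1) * b.factorial := by
      push_cast [Nat.factorial_succ]; ring
    have hstep : ((a + 1 + b + 1).factorial : ℝ) = ((a + (b+1) + 1).factorial : ℝ) := by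
      norm_num; ring_nf
    have hf3 : ((a + (b+1) + 1).factorial : ℝ) ≠ 0 := by positivity
    rw [hstep]
    rw [hfa, hfb]
    field_simp
    ring

lemma var_bound_aux {A B : ℝ} (hA : 0 ≤ A) (hAB : A ≤ B) (hB : 1 ≤ B) :
    (A+1)*(A+2)/((B+2)*(B+3)) - 2*(A/B)*((A+1)/(B+2)) + (A/B)^2 ≤ 5/(4*B) := by
  have hB0 : (0:ℝ) < B := by linarith
  have h2 : (0:ℝ) < B + 2 := by linarith
  have h3 : (0:ℝ) < B + 3 := by linarith
  have lhs_eq : (A+1)*(A+2)/((B+2)*(B+3)) - 2*(A/B)*((A+1)/(B+2)) + (A/B)^2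
      = ((A+1)*(A+2)*B^2 - 2*A*(A+1)*B*(B+3) + A^2*(B+2)*(B+3)) / (B^2*((B+2)*(B+3))) := by
    field_simp
  rw [lhs_eq, div_le_div_iff₀ (by positivity) (by positivity)]
  nlinarith [sq_nonneg (B - 2*A), mul_nonneg (mul_nonneg (sub_nonneg.2 hAB) hA) hB0.le,
    mul_nonneg (mul_nonneg (mul_nonneg (sub_nonneg.2 hAB) hA) hB0.le) hB0.le,
    mul_nonneg (mul_nonneg (sq_nonneg (B - 2*A)) hB0.le) hB0.le,
    sq_nonneg B, mul_pos hB0 hB0]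

lemma rpow_abs_le {u δ α : ℝ} (hδ : 0 < δ) (hα0 : 0 < α) (hα1 : α ≤ 1) :
    |u| ^ α ≤ δ ^ α + δ ^ (α - 2) * u ^ 2 := by
  rcases le_or_gt (|u|) δ with h | h
  · have h1 : |u| ^ α ≤ δ ^ α := Real.rpow_le_rpow (abs_nonneg u) h hα0.le
    have h2 : 0 ≤ δ ^ (α - 2) * u ^ 2 := by positivity
    linarith
  · have hu : 0 < |u| := lt_trans hδ h
    have e : |u| ^ α = |u| ^ (α - 2) * u ^ 2 := by
      rw [← sq_abs u, ← Real.rpow_natCast |u| 2, ← Real.rpow_add hu]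
      norm_num
    have h1 : |u| ^ (α - 2) ≤ δ ^ (α - 2) :=
      Real.rpow_le_rpow_of_nonpos hδ h.le (by linarith)
    have h2 : |u| ^ (α - 2) * u ^ 2 ≤ δ ^ (α - 2) * u ^ 2 :=
      mul_le_mul_of_nonneg_right h1 (sq_nonneg u)
    have h3 : 0 ≤ δ ^ α := (Real.rpow_pos_of_pos hδ α).le
    linarith [e ▸ h2]

lemma rpow_add_le {a b α : ℝ} (ha : 0 ≤ a) (hb : 0 ≤ b) (hα0 : 0 ≤ α) (hα1 : α ≤ 1) :
    (a + b) ^ α ≤ a ^ α + b ^ α := by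
  have h := NNReal.coe_le_coe.2 (NNReal.rpow_add_le_add_rpow a.toNNReal b.toNNReal hα0 hα1)
  push_cast [NNReal.coe_rpow] at h
  rwa [Real.coe_toNNReal a ha, Real.coe_toNNReal b hb] at h

theorem stmt_15 (α : ℝ) (hα : α ∈ Set.Ioc (0:ℝ) 1)
    (C : ℝ) (hC : 0 < C) (y y' : ℝ → ℝ)
    (hy : ∀ s ∈ Set.Icc (0:ℝ) 1, HasDerivAt y (y' s) s)
    (hy' : ContinuousOn y' (Set.Icc (0:ℝ) 1))
    (Hy : ℝ) (hHy : 0 ≤ Hy)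
    (hyHolder : ∀ s ∈ Set.Icc (0:ℝ) 1, ∀ t ∈ Set.Icc (0:ℝ) 1,
      |y' s - y' t| ≤ Hy * |s - t| ^ α)
    (S : ℕ → ℕ → ℝ)
    (hS : ∀ k l, S k l = C ^ (k + l) *
      ∫ s in (0:ℝ)..1, s ^ k * (1 - s) ^ l / (k.factorial * l.factorial) * y' s)
    (ε₀ : ℝ) (hε₀ : ε₀ ∈ Set.Ioo (0:ℝ) (1/2))
    (x : ℝ) (hx : x ∈ Set.Icc (0:ℝ) 1)
    (p q : ℕ → ℕ) (hq : ∀ n, 0 < q n)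
    (hpq : ∀ n, (p n : ℝ) / (q n : ℝ) ∈ Set.Icc (0:ℝ) 1)
    (happrox : ∀ n, |(p n : ℝ) / (q n : ℝ) - x| < (q n : ℝ) ^ (-(1/2) : ℝ))
    (hqt : Filter.Tendsto q Filter.atTop Filter.atTop) :
    ∃ C₁ > (0:ℝ), ∃ N : ℕ, ∀ n ≥ N,
      |y' x - ((q n + 1).factorial : ℝ) * S (p n) (q n - p n) / C ^ (q n)|
        ≤ C₁ * (q n : ℝ) ^ ((-(1/2) + ε₀) * α) := by
  obtain ⟨hα0, hα1⟩ := hα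
  obtain ⟨hε0, hε1⟩ := hε₀
  refine ⟨4*Hy + 1, by positivity, 0, fun n _ => ?_⟩
  set P := p n with hP
  set Q := q n with hQn
  have hQ0 : 0 < Q := hq n
  have hQR : (0:ℝ) < (Q:ℝ) := by exact_mod_cast hQ0
  have hQ1 : (1:ℝ) ≤ (Q:ℝ) := by exact_mod_cast hQ0
  have hPQ : P ≤ Q := by
    by_contra h'
    push_neg at h'
    have hlt : (1:ℝ) < (P:ℝ)/(Q:ℝ) := by
      rw [lt_div_iff₀ hQR, one_mul]
      exact_mod_cast h'
    have := (hpq n).2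
    linarith
  set m : ℝ := (P:ℝ)/(Q:ℝ) with hm
  have hm0 : 0 ≤ m := (hpq n).1
  have hm1 : m ≤ 1 := (hpq n).2
  set b := Q - P with hb
  have hQb : P + b = Q := Nat.add_sub_cancel' hPQ
  set K : ℝ := ((Q+1).factorial : ℝ) / ((P.factorial : ℝ) * (b.factorial : ℝ)) with hK
  have hKpos : 0 < K := by positivity
  set f : ℝ → ℝ := fun s => K * (s ^ P * (1 - s) ^ b) with hf
  have hfc : Continuous f := by fun_prop
  have huIcc : Set.uIcc (0:ℝ) 1 = Set.Icc (0:ℝ) 1 := Set.uIcc_of_le zero_le_one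
  -- moments
  have hfact : ((P + b + 1).factorial : ℝ) = ((Q+1).factorial : ℝ) := by rw [hQb]
  have I0 : (∫ s in (0:ℝ)..1, f s) = 1 := by
    rw [hf]
    rw [intervalIntegral.integral_const_mul, beta_nat, hfact, hK]
    field_simp
  have I1 : (∫ s in (0:ℝ)..1, f s * s) = ((P:ℝ)+1)/((Q:ℝ)+2) := by
    have e : (∫ s in (0:ℝ)..1, f s * s) = K * ∫ s in (0:ℝ)..1, s ^ (P+1) * (1 - s) ^ b := by
      rw [← intervalIntegral.integral_const_mul]
      apply intervalIntegral.integral_congr; intro s _; simp [hf]; ring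
    rw [e, beta_nat]
    have hfa : ((P+1).factorial : ℝ) = ((P:ℝ)+1) * P.factorial := by
      push_cast [Nat.factorial_succ]; ring
    have hQ2 : ((P + 1 + b + 1).factorial : ℝ) = ((Q:ℝ)+2) * (Q+1).factorial := by
      have : P + 1 + b + 1 = (Q + 1) + 1 := by omega
      rw [this]; push_cast [Nat.factorial_succ]; ring
    rw [hfa, hQ2, hK]
    have h1 : (P.factorial : ℝ) ≠ 0 := by positivity
    have h2 : (b.factorial : ℝ) ≠ 0 := by positivity
    have h3 : ((Q+1).factorial : ℝ) ≠ 0 := by positivity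
    field_simp
  have I2 : (∫ s in (0:ℝ)..1, f s * s^2) = (((P:ℝ)+1)*((P:ℝ)+2))/((((Q:ℝ)+2))*(((Q:ℝ)+3))) := by
    have e : (∫ s in (0:ℝ)..1, f s * s^2) = K * ∫ s in (0:ℝ)..1, s ^ (P+2) * (1 - s) ^ b := by
      rw [← intervalIntegral.integral_const_mul]
      apply intervalIntegral.integral_congr; intro s _; simp [hf]; ring
    rw [e, beta_nat]
    have hfa : ((P+2).factorial : ℝ) = ((P:ℝ)+2) * (((P:ℝ)+1) * P.factorial) := by
      have : P + 2 = (P + 1) + 1 := by omega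
      rw [this, Nat.factorial_succ, Nat.factorial_succ]; push_cast; ring
    have hQ3 : ((P + 2 + b + 1).factorial : ℝ) = ((Q:ℝ)+3) * (((Q:ℝ)+2) * (Q+1).factorial) := by
      have : P + 2 + b + 1 = ((Q + 1) + 1) + 1 := by omega
      rw [this, Nat.factorial_succ, Nat.factorial_succ]; push_cast; ring
    rw [hfa, hQ3, hK]
    have h1 : (P.factorial : ℝ) ≠ 0 := by positivity
    have h2 : (b.factorial : ℝ) ≠ 0 := by positivity
    have h3 : ((Q+1).factorial : ℝ) ≠ 0 := by positivity
    field_simp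
  -- integrability facts
  have int_f : IntervalIntegrable f volume 0 1 := hfc.intervalIntegrable 0 1
  have int_fs : IntervalIntegrable (fun s => f s * s) volume 0 1 :=
    (hfc.mul continuous_id).intervalIntegrable 0 1
  have int_fs2 : IntervalIntegrable (fun s => f s * s^2) volume 0 1 :=
    (hfc.mul (continuous_id.pow 2)).intervalIntegrable 0 1
  have int_fv : IntervalIntegrable (fun s => f s * (s - m)^2) volume 0 1 :=
    (hfc.mul (by fun_prop)).intervalIntegrable 0 1
  have hy'i : IntervalIntegrable y' volume 0 1 := by
    apply ContinuousOn.intervalIntegrable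
    rw [huIcc]; exact hy'
  have int_fy : IntervalIntegrable (fun s => f s * y' s) volume 0 1 := by
    apply ContinuousOn.intervalIntegrable
    rw [huIcc]; exact hfc.continuousOn.mul hy'
  have int_g : IntervalIntegrable (fun s => f s * (y' x - y' s)) volume 0 1 := by
    apply ContinuousOn.intervalIntegrable
    rw [huIcc]
    exact hfc.continuousOn.mul (continuousOn_const.sub hy')
  -- variance bound
  have hVval : (∫ s in (0:ℝ)..1, f s * (s - m)^2)
      = (∫ s in (0:ℝ)..1, f s * s^2) - 2*m*(∫ s in (0:ℝ)..1, f s * s)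
        + m^2*(∫ s in (0:ℝ)..1, f s) := by
    rw [← intervalIntegral.integral_const_mul, ← intervalIntegral.integral_const_mul,
      ← intervalIntegral.integral_sub int_fs2 (int_fs.const_mul _),
      ← intervalIntegral.integral_add (int_fs2.sub (int_fs.const_mul _)) (int_f.const_mul _)]
    apply intervalIntegral.integral_congr; intro s _; ring
  have hV : (∫ s in (0:ℝ)..1, f s * (s - m)^2) ≤ 5/(4*(Q:ℝ)) := by
    rw [hVval, I0, I1, I2]
    have hAB : (P:ℝ) ≤ (Q:ℝ) := by exact_mod_cast hPQ
    have := var_bound_aux (A := (P:ℝ)) (B := (Q:ℝ)) (Nat.cast_nonneg P) hAB hQ1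
    calc ((P:ℝ)+1)*((P:ℝ)+2)/(((Q:ℝ)+2)*((Q:ℝ)+3)) - 2*m*(((P:ℝ)+1)/((Q:ℝ)+2)) + m^2*1
        = ((P:ℝ)+1)*((P:ℝ)+2)/(((Q:ℝ)+2)*((Q:ℝ)+3)) - 2*((P:ℝ)/(Q:ℝ))*(((P:ℝ)+1)/((Q:ℝ)+2))
          + ((P:ℝ)/(Q:ℝ))^2 := by rw [hm]; ring
      _ ≤ 5/(4*(Q:ℝ)) := this
  -- rewrite the target quantity as an integral
  have hCQ : (C:ℝ) ^ Q ≠ 0 := pow_ne_zero _ hC.ne'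
  have hT : ((Q + 1).factorial : ℝ) * S P b / C ^ Q = ∫ s in (0:ℝ)..1, f s * y' s := by
    rw [hS P b, hQb]
    have e : (∫ s in (0:ℝ)..1, s ^ P * (1 - s) ^ b / ((P.factorial : ℝ) * (b.factorial : ℝ)) * y' s)
        = (1 / (((Q+1).factorial : ℝ)))
          * ∫ s in (0:ℝ)..1, f s * y' s := by
      rw [← intervalIntegral.integral_const_mul]
      apply intervalIntegral.integral_congr; intro s _
      simp only [hf, hK]
      have h1 : (P.factorial : ℝ) ≠ 0 := by positivity
      have h2 : (b.factorial : ℝ) ≠ 0 := by positivity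
      have h3 : ((Q+1).factorial : ℝ) ≠ 0 := by positivity
      field_simp
    rw [e]
    have h1 : (P.factorial : ℝ) ≠ 0 := by positivity
    have h2 : (b.factorial : ℝ) ≠ 0 := by positivity
    have h3 : ((Q+1).factorial : ℝ) ≠ 0 := by positivity
    field_simp
  -- main difference as integral
  have hdiff : y' x - ((Q + 1).factorial : ℝ) * S P b / C ^ Q
      = ∫ s in (0:ℝ)..1, f s * (y' x - y' s) := by
    rw [hT]
    have e : (∫ s in (0:ℝ)..1, f s * (y' x - y' s))
        = (∫ s in (0:ℝ)..1, f s * y' x) - ∫ s in (0:ℝ)..1, f s * y' s := by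
      rw [← intervalIntegral.integral_sub (by
          apply ContinuousOn.intervalIntegrable; rw [huIcc]
          exact hfc.continuousOn.mul continuousOn_const) int_fy]
      apply intervalIntegral.integral_congr; intro s _; ring
    rw [e, intervalIntegral.integral_mul_const, I0, one_mul]
  -- set δ and related rpow computations
  set δ : ℝ := (Q:ℝ) ^ (-(1/2) : ℝ) with hδ
  have hδpos : 0 < δ := Real.rpow_pos_of_pos hQR _
  have hδα : δ ^ α = (Q:ℝ) ^ ((-(1/2)) * α) := by
    rw [hδ, ← Real.rpow_mul hQR.le]
  have hδα2 : δ ^ (α - 2) = (Q:ℝ) * (Q:ℝ) ^ ((-(1/2)) * α) := by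
    rw [hδ, ← Real.rpow_mul hQR.le,
      show (-(1/2)) * (α - 2) = 1 + (-(1/2)) * α by ring, Real.rpow_add hQR, Real.rpow_one]
  -- pointwise bound
  set c : ℝ := |x - m| ^ α + δ ^ α with hc
  have hfnn : ∀ s ∈ Set.Icc (0:ℝ) 1, 0 ≤ f s := by
    intro s hs
    have h1 : (0:ℝ) ≤ s := hs.1
    have h2 : (0:ℝ) ≤ 1 - s := by linarith [hs.2]
    positivity
  have hpoint : ∀ s ∈ Set.Icc (0:ℝ) 1,
      |f s * (y' x - y' s)| ≤ (Hy * c) * f s + (Hy * δ ^ (α-2)) * (f s * (s - m)^2) := by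
    intro s hs
    have hfs := hfnn s hs
    rw [abs_mul, abs_of_nonneg hfs]
    have hH : |y' x - y' s| ≤ Hy * |x - s| ^ α := hyHolder x hx s hs
    have h1 : |x - s| ≤ |x - m| + |m - s| := by
      calc |x - s| = |(x - m) + (m - s)| := by ring_nf
        _ ≤ |x - m| + |m - s| := abs_add_le _ _
    have h2 : |x - s| ^ α ≤ (|x - m| + |m - s|) ^ α :=
      Real.rpow_le_rpow (abs_nonneg _) h1 hα0.le
    have h3 : (|x - m| + |m - s|) ^ α ≤ |x - m| ^ α + |m - s| ^ α :=
      rpow_add_le (abs_nonneg _) (abs_nonneg _) hα0.le hα1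
    have h4 : |m - s| ^ α ≤ δ ^ α + δ ^ (α - 2) * (m - s) ^ 2 :=
      rpow_abs_le hδpos hα0 hα1
    have h5 : (m - s)^2 = (s - m)^2 := by ring
    have hchain : |y' x - y' s| ≤ Hy * (c + δ ^ (α-2) * (s - m)^2) := by
      calc |y' x - y' s| ≤ Hy * |x - s| ^ α := hH
        _ ≤ Hy * (c + δ ^ (α-2) * (s - m)^2) := by
            apply mul_le_mul_of_nonneg_left _ hHy
            rw [hc, ← h5]
            calc |x - s| ^ α ≤ |x - m| ^ α + |m - s| ^ α := le_trans h2 h3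
              _ ≤ |x - m| ^ α + (δ ^ α + δ ^ (α - 2) * (m - s) ^ 2) := by linarith
              _ = |x - m| ^ α + δ ^ α + δ ^ (α - 2) * (m - s) ^ 2 := by ring
    calc f s * |y' x - y' s| ≤ f s * (Hy * (c + δ ^ (α-2) * (s - m)^2)) :=
          mul_le_mul_of_nonneg_left hchain hfs
      _ = (Hy * c) * f s + (Hy * δ ^ (α-2)) * (f s * (s - m)^2) := by ring
  -- integrate the bound
  have int_rhs : IntervalIntegrable
      (fun s => (Hy * c) * f s + (Hy * δ ^ (α-2)) * (f s * (s - m)^2)) volume 0 1 :=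
    (int_f.const_mul _).add (int_fv.const_mul _)
  have habs : |∫ s in (0:ℝ)..1, f s * (y' x - y' s)|
      ≤ ∫ s in (0:ℝ)..1, |f s * (y' x - y' s)| :=
    intervalIntegral.abs_integral_le_integral_abs zero_le_one
  have hmono : (∫ s in (0:ℝ)..1, |f s * (y' x - y' s)|)
      ≤ ∫ s in (0:ℝ)..1, ((Hy * c) * f s + (Hy * δ ^ (α-2)) * (f s * (s - m)^2)) :=
    intervalIntegral.integral_mono_on zero_le_one int_g.abs int_rhs hpoint
  have hsum : (∫ s in (0:ℝ)..1, ((Hy * c) * f s + (Hy * δ ^ (α-2)) * (f s * (s - m)^2)))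
      = (Hy * c) + (Hy * δ ^ (α-2)) * (∫ s in (0:ℝ)..1, f s * (s - m)^2) := by
    rw [intervalIntegral.integral_add (int_f.const_mul _) (int_fv.const_mul _),
      intervalIntegral.integral_const_mul (Hy * c) f,
      intervalIntegral.integral_const_mul (Hy * δ ^ (α-2)) (fun s => f s * (s - m)^2), I0, mul_one]
  -- final quantitative bound
  have hxm : |x - m| ^ α ≤ (Q:ℝ) ^ ((-(1/2)) * α) := by
    have h1 : |x - m| ≤ δ := by
      have := happrox n
      rw [← hδ] at this
      calc |x - m| = |m - x| := (abs_sub_comm x m)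
        _ ≤ δ := this.le
    rw [← hδα]
    exact Real.rpow_le_rpow (abs_nonneg _) h1 hα0.le
  have hmain : |y' x - ((Q + 1).factorial : ℝ) * S P b / C ^ Q|
      ≤ Hy * (13/4) * (Q:ℝ) ^ ((-(1/2)) * α) := by
    rw [hdiff]
    have step : |∫ s in (0:ℝ)..1, f s * (y' x - y' s)|
        ≤ (Hy * c) + (Hy * δ ^ (α-2)) * (∫ s in (0:ℝ)..1, f s * (s - m)^2) := by
      rw [← hsum]; exact le_trans habs hmono
    have hVnn : 0 ≤ (∫ s in (0:ℝ)..1, f s * (s - m)^2) :=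
      intervalIntegral.integral_nonneg zero_le_one
        (fun u hu => mul_nonneg (hfnn u hu) (sq_nonneg _))
    have hd2 : 0 ≤ Hy * δ ^ (α-2) := by positivity
    have step2 : (Hy * δ ^ (α-2)) * (∫ s in (0:ℝ)..1, f s * (s - m)^2)
        ≤ (Hy * δ ^ (α-2)) * (5/(4*(Q:ℝ))) := mul_le_mul_of_nonneg_left hV hd2
    have e2 : (Hy * δ ^ (α-2)) * (5/(4*(Q:ℝ))) = Hy * (5/4) * (Q:ℝ) ^ ((-(1/2)) * α) := by
      rw [hδα2]
      field_simp
    have hcb : c ≤ 2 * (Q:ℝ) ^ ((-(1/2)) * α) := by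
      rw [hc, hδα]
      linarith [hxm]
    have hc1 : Hy * c ≤ Hy * (2 * (Q:ℝ) ^ ((-(1/2)) * α)) := mul_le_mul_of_nonneg_left hcb hHy
    calc |∫ s in (0:ℝ)..1, f s * (y' x - y' s)|
        ≤ (Hy * c) + (Hy * δ ^ (α-2)) * (∫ s in (0:ℝ)..1, f s * (s - m)^2) := step
      _ ≤ Hy * (2 * (Q:ℝ) ^ ((-(1/2)) * α)) + Hy * (5/4) * (Q:ℝ) ^ ((-(1/2)) * α) := by
          rw [← e2]; exact add_le_add hc1 step2
      _ = Hy * (13/4) * (Q:ℝ) ^ ((-(1/2)) * α) := by ring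
  have hexp : (Q:ℝ) ^ ((-(1/2)) * α) ≤ (Q:ℝ) ^ ((-(1/2) + ε₀) * α) := by
    apply Real.rpow_le_rpow_of_exponent_le hQ1
    have : (-(1/2) : ℝ) ≤ -(1/2) + ε₀ := by linarith
    exact mul_le_mul_of_nonneg_right this hα0.le
  have hpow_nn : 0 ≤ (Q:ℝ) ^ ((-(1/2) + ε₀) * α) := (Real.rpow_pos_of_pos hQR _).le
  calc |y' x - ((Q + 1).factorial : ℝ) * S P b / C ^ Q|
      ≤ Hy * (13/4) * (Q:ℝ) ^ ((-(1/2)) * α) := hmain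
    _ ≤ Hy * (13/4) * (Q:ℝ) ^ ((-(1/2) + ε₀) * α) :=
        mul_le_mul_of_nonneg_left hexp (by positivity)
    _ ≤ (4*Hy + 1) * (Q:ℝ) ^ ((-(1/2) + ε₀) * α) := by
        apply mul_le_mul_of_nonneg_right _ hpow_nn
        linarith
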